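/- For 2 ≤ i and 0 ≤ ν ≤ i-1, define Z_{ν,i} as the (i-ν-1)-th elementary symmetric polynomial in the variables (γ_1 - 1), …, (γ_{i-1} - 1) (with Z_{i-1,i} = 1, and Z_{i,i} = 0). Then the recursively defined sequence ψ_i(t) = ψ_{i-1}(t+1) + (γ_i - 1)ψ_{i-1}(t), with ψ_0 given, satisfies ψ_{i-1}(t) = Σ_{ν=0}^{i-1} Z_{ν,i} ψ_0(t+ν) for all t. -/

import Mathlib

/-- The coefficient `Z ν i` of equation (22): the elementary symmetric
polynomial of degree `i - ν - 1` in the variables `γ 1 - 1, …, γ (i-1) - 1`. -/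
noncomputable def Zcoef (γ : ℕ → ℝ) (ν i : ℕ) : ℝ :=
  ∑ S ∈ (Finset.Icc 1 (i - 1)).powersetCard (i - ν - 1), ∏ s ∈ S, (γ s - 1)

private def E (γ : ℕ → ℝ) (k d : ℕ) : ℝ :=
  ∑ S ∈ (Finset.Icc 1 k).powersetCard d, ∏ s ∈ S, (γ s - 1)

private lemma E_zero (γ : ℕ → ℝ) (k : ℕ) : E γ k 0 = 1 := by
  simp [E]

private lemma E_top (γ : ℕ → ℝ) (k d : ℕ) (h : k < d) : E γ k d = 0 := by
  have : (Finset.Icc 1 k).powersetCard d = ∅ := by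
    rw [Finset.powersetCard_eq_empty]
    simpa using h
  simp [E, this]

private lemma E_pascal (γ : ℕ → ℝ) (k d : ℕ) :
    E γ (k + 1) (d + 1) = E γ k (d + 1) + (γ (k + 1) - 1) * E γ k d := by
  have hnot : (k + 1) ∉ Finset.Icc 1 k := by simp
  have hins : Finset.Icc 1 (k + 1) = insert (k + 1) (Finset.Icc 1 k) := by
    ext x; simp [Finset.mem_Icc]; omega
  have hdisj : Disjoint ((Finset.Icc 1 k).powersetCard (d + 1))
      (((Finset.Icc 1 k).powersetCard d).image (insert (k + 1))) := by
    rw [Finset.disjoint_left]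
    intro S hS hS'
    simp only [Finset.mem_image] at hS'
    obtain ⟨T, hT, rfl⟩ := hS'
    have := (Finset.mem_powersetCard.mp hS).1
    exact hnot (this (Finset.mem_insert_self _ _))
  have hinj : ∀ T ∈ (Finset.Icc 1 k).powersetCard d,
      ∀ T' ∈ (Finset.Icc 1 k).powersetCard d,
      insert (k + 1) T = insert (k + 1) T' → T = T' := by
    intro T hT T' hT' h
    have h1 : (k + 1) ∉ T := fun hx => hnot ((Finset.mem_powersetCard.mp hT).1 hx)
    have h2 : (k + 1) ∉ T' := fun hx => hnot ((Finset.mem_powersetCard.mp hT').1 hx)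
    rw [← Finset.erase_insert h1, ← Finset.erase_insert h2, h]
  rw [E, hins, Finset.powersetCard_succ_insert hnot, Finset.sum_union hdisj,
    Finset.sum_image hinj]
  congr 1
  rw [E, Finset.mul_sum]
  apply Finset.sum_congr rfl
  intro T hT
  have h1 : (k + 1) ∉ T := fun hx => hnot ((Finset.mem_powersetCard.mp hT).1 hx)
  rw [Finset.prod_insert h1]

private lemma key (γ : ℕ → ℝ) (ψ : ℕ → ℕ → ℝ)
    (hrec : ∀ j t : ℕ, ψ (j + 1) t = ψ j (t + 1) + (γ (j + 1) - 1) * ψ j t) :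
    ∀ k t : ℕ, ψ k t = ∑ ν ∈ Finset.range (k + 1), E γ k (k - ν) * ψ 0 (t + ν) := by
  intro k
  induction k with
  | zero => intro t; simp [E_zero]
  | succ k ih =>
    intro t
    rw [hrec k t, ih (t + 1), ih t]
    have step : ∀ ν ∈ Finset.range (k + 1),
        E γ (k + 1) (k + 1 - ν) * ψ 0 (t + ν)
          = E γ k (k + 1 - ν) * ψ 0 (t + ν)
            + (γ (k + 1) - 1) * (E γ k (k - ν) * ψ 0 (t + ν)) := by
      intro ν hν
      have hν' : ν ≤ k := Nat.lt_succ_iff.mp (Finset.mem_range.mp hν)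
      have h1 : k + 1 - ν = (k - ν) + 1 := by omega
      rw [h1, E_pascal]; ring
    have rhs : ∑ ν ∈ Finset.range (k + 1 + 1), E γ (k + 1) (k + 1 - ν) * ψ 0 (t + ν)
        = (∑ ν ∈ Finset.range (k + 1), E γ k (k - ν) * ψ 0 (t + 1 + ν))
          + (γ (k + 1) - 1) * ∑ ν ∈ Finset.range (k + 1), E γ k (k - ν) * ψ 0 (t + ν) := by
      rw [Finset.sum_range_succ, Finset.sum_congr rfl step, Finset.sum_add_distrib]
      have h2 : ∑ ν ∈ Finset.range (k + 1), E γ k (k + 1 - ν) * ψ 0 (t + ν)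
          = ∑ ν ∈ Finset.range k, E γ k (k - ν) * ψ 0 (t + 1 + ν) := by
        rw [Finset.sum_range_succ']
        have h0 : E γ k (k + 1 - 0) = 0 := E_top γ k (k + 1) (by omega)
        simp only [h0, zero_mul, add_zero]
        apply Finset.sum_congr rfl
        intro ν hν
        have e1 : k + 1 - (ν + 1) = k - ν := by omega
        have e2 : t + (ν + 1) = t + 1 + ν := by omega
        rw [e1, e2]
      have h3 : ∑ ν ∈ Finset.range (k + 1), (γ (k + 1) - 1) * (E γ k (k - ν) * ψ 0 (t + ν))
          = (γ (k + 1) - 1) * ∑ ν ∈ Finset.range (k + 1), E γ k (k - ν) * ψ 0 (t + ν) := by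
        rw [Finset.mul_sum]
      rw [h2, h3]
      have h4 : E γ (k + 1) (k + 1 - (k + 1)) * ψ 0 (t + (k + 1))
          = E γ k (k - k) * ψ 0 (t + 1 + k) := by
        have e3 : t + (k + 1) = t + 1 + k := by omega
        simp only [Nat.sub_self, e3, E_zero]
      rw [h4]
      rw [Finset.sum_range_succ (fun ν => E γ k (k - ν) * ψ 0 (t + 1 + ν)) k]
      ring
    rw [rhs]

theorem dhocbf_expansion_coefficients (γ : ℕ → ℝ) (i : ℕ) (hi : 2 ≤ i)
    (ψ : ℕ → ℕ → ℝ)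
    (hrec : ∀ j t : ℕ, ψ (j + 1) t = ψ j (t + 1) + (γ (j + 1) - 1) * ψ j t) :
    ∀ t : ℕ, ψ (i - 1) t = ∑ ν ∈ Finset.range i, Zcoef γ ν i * ψ 0 (t + ν) := by
  intro t
  obtain ⟨k, rfl⟩ : ∃ k, i = k + 1 := ⟨i - 1, by omega⟩
  simp only [Nat.add_sub_cancel]
  rw [key γ ψ hrec k t]
  apply Finset.sum_congr rfl
  intro ν hν
  have hν' : ν ≤ k := Nat.lt_succ_iff.mp (Finset.mem_range.mp hν)
  have : k + 1 - ν - 1 = k - ν := by omega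
  rw [Zcoef, this]
  rfl
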